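/- Let x₀ > 0, let q : [0,x₀] → ℝ be nonnegative, differentiable and monotone increasing, and let z > 0 satisfy z² > q(x₀). Let φ be the Prüfer angle of q at z, let i ≥ 0 be an integer, D ∈ [π/2, π], and let a ≤ b in (0,x₀] satisfy φ(a) = iπ + π/2 and φ(b) = iπ + π/2 + D; let ψ denote the inverse of φ restricted to [a,b] and set Q(t) = q(ψ(t + (i+1)π))/z². Then there exists c₁ ∈ (iπ + π/2, iπ + π/2 + D) such that −(i+1)π·∫_{−π/2}^{−π/2+D} Q(t)·sin t·cos t/(1 − Q(t)·sin²t) dt ≥ −((i+1)π²/(2z²)) · (1/(1 − q(ψ(c₁))/z²)) · q'(ψ(c₁))/φ'(ψ(c₁)). -/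

import Mathlib

open Real Set

private lemma aux_cross (A Q s c d : ℝ) (hd : d ≠ 0) :
    -(1/2 : ℝ) * (-(A * s ^ 2 + Q * (2 * s * c)) / d) - Q * s * c / d = A * s ^ 2 / (2 * d) := by
  field_simp
  ring

set_option maxHeartbeats 1000000 in
/-- Lemma 3.4 iii): lower bound for the cross term via the mean value theorem;
here φ'(ψ(c₁)) = z − q(ψ(c₁))/z·sin²(φ(ψ(c₁))) by the Prüfer ODE. -/
theorem cross_term_lower_bound
    (x₀ : ℝ) (hx₀ : 0 < x₀)
    (q q' : ℝ → ℝ)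
    (hqnonneg : ∀ x ∈ Icc 0 x₀, 0 ≤ q x)
    (hqdiff : ∀ x ∈ Icc 0 x₀, HasDerivAt q (q' x) x)
    (hmono : MonotoneOn q (Icc 0 x₀))
    (z : ℝ) (hz : 0 < z) (hsup : q x₀ < z ^ 2)
    (φ : ℝ → ℝ) (hφ0 : φ 0 = 0)
    (hφODE : ∀ x ∈ Icc 0 x₀, HasDerivAt φ (z - q x / z * Real.sin (φ x) ^ 2) x)
    (i : ℕ) (D : ℝ) (hD : D ∈ Icc (π / 2) π)
    (a b : ℝ) (ha : a ∈ Ioc 0 x₀) (hb : b ∈ Ioc 0 x₀) (hab : a ≤ b)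
    (hφa : φ a = i * π + π / 2) (hφb : φ b = i * π + π / 2 + D)
    (ψ : ℝ → ℝ)
    (hψ : ∀ t ∈ Icc (φ a) (φ b), ψ t ∈ Icc a b ∧ φ (ψ t) = t) :
    ∃ c₁ ∈ Ioo ((i : ℝ) * π + π / 2) ((i : ℝ) * π + π / 2 + D),
      -(((i : ℝ) + 1) * π) *
          (∫ t in (-(π / 2))..(-(π / 2) + D),
            (q (ψ (t + ((i : ℝ) + 1) * π)) / z ^ 2) * Real.sin t * Real.cos t /
              (1 - (q (ψ (t + ((i : ℝ) + 1) * π)) / z ^ 2) * Real.sin t ^ 2)) ≥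
        -(((i : ℝ) + 1) * π ^ 2 / (2 * z ^ 2)) *
          (1 / (1 - q (ψ c₁) / z ^ 2)) *
          (q' (ψ c₁) / (z - q (ψ c₁) / z * Real.sin (φ (ψ c₁)) ^ 2)) := by
  obtain ⟨hD1, hD2⟩ := hD
  have hπ : (0:ℝ) < π := Real.pi_pos
  have hD0 : 0 < D := lt_of_lt_of_le (by positivity) hD1
  set lo : ℝ := (i:ℝ) * π + π / 2 with hlodef
  set hi : ℝ := (i:ℝ) * π + π / 2 + D with hhidef
  have hlohi : lo < hi := by rw [hhidef]; linarith
  have hz2 : (0:ℝ) < z ^ 2 := by positivity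
  have hx₀mem : x₀ ∈ Icc (0:ℝ) x₀ := ⟨hx₀.le, le_rfl⟩
  have hsubab : Icc a b ⊆ Icc 0 x₀ := fun x hx => ⟨le_trans ha.1.le hx.1, le_trans hx.2 hb.2⟩
  have hqlt : ∀ x ∈ Icc (0:ℝ) x₀, q x < z ^ 2 := fun x hx =>
    lt_of_le_of_lt (hmono hx hx₀mem hx.2) hsup
  have hφ'pos : ∀ x ∈ Icc (0:ℝ) x₀, 0 < z - q x / z * Real.sin (φ x) ^ 2 := by
    intro x hx
    have hs1 : Real.sin (φ x) ^ 2 ≤ 1 := Real.sin_sq_le_one _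
    have h0 : 0 ≤ q x / z := div_nonneg (hqnonneg x hx) hz.le
    have h1 : q x / z * Real.sin (φ x) ^ 2 ≤ q x / z := by nlinarith
    have h2 : q x / z < z := by
      rw [div_lt_iff₀ hz]
      have := hqlt x hx; nlinarith
    linarith
  have hφcont : ContinuousOn φ (Icc 0 x₀) :=
    fun x hx => (hφODE x hx).continuousAt.continuousWithinAt
  have hqcont : ContinuousOn q (Icc 0 x₀) :=
    fun x hx => (hqdiff x hx).continuousAt.continuousWithinAt
  have hφmono : StrictMonoOn φ (Icc a b) := by
    apply strictMonoOn_of_hasDerivWithinAt_pos (f' := fun x => z - q x / z * Real.sin (φ x) ^ 2)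
      (convex_Icc a b) (hφcont.mono hsubab)
    · intro x hx
      rw [interior_Icc] at hx
      exact (hφODE x (hsubab (Ioo_subset_Icc_self hx))).hasDerivWithinAt
    · intro x hx
      rw [interior_Icc] at hx
      exact hφ'pos x (hsubab (Ioo_subset_Icc_self hx))
  have hψ' : ∀ t ∈ Icc lo hi, ψ t ∈ Icc a b ∧ φ (ψ t) = t := by
    intro t ht
    exact hψ t (by rw [hφa, hφb]; exact ht)
  have habs : a < b := by
    rcases lt_or_eq_of_le hab with h | h
    · exact h
    · exfalso
      have : lo = hi := by rw [← hφa, ← hφb, h]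
      linarith
  have hφmem : ∀ x ∈ Icc a b, φ x ∈ Icc lo hi := by
    intro x hx
    constructor
    · rw [← hφa]; exact hφmono.monotoneOn ⟨le_rfl, hab⟩ hx hx.1
    · rw [← hφb]; exact hφmono.monotoneOn hx ⟨hab, le_rfl⟩ hx.2
  have hψφ : ∀ x ∈ Icc a b, ψ (φ x) = x := by
    intro x hx
    obtain ⟨hmem, heq⟩ := hψ' _ (hφmem x hx)
    exact hφmono.injOn hmem hx heq
  have hψlo : ψ lo = a := by rw [← hφa]; exact hψφ a ⟨le_rfl, hab⟩
  have hψhi : ψ hi = b := by rw [← hφb]; exact hψφ b ⟨hab, le_rfl⟩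
  have hψmono : StrictMonoOn ψ (Icc lo hi) := by
    intro s hs t ht hst
    by_contra hle
    push_neg at hle
    have h2 := hφmono.monotoneOn (hψ' t ht).1 (hψ' s hs).1 hle
    rw [(hψ' t ht).2, (hψ' s hs).2] at h2
    linarith
  have hψimage : Icc a b ⊆ ψ '' Icc lo hi := by
    intro x hx
    exact ⟨φ x, hφmem x hx, hψφ x hx⟩
  -- continuity of ψ on [lo, hi]
  have hψcont : ContinuousOn ψ (Icc lo hi) := by
    intro t ht
    have hleft : ContinuousWithinAt ψ (Icc lo hi ∩ Iic t) t := by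
      rcases eq_or_lt_of_le ht.1 with h | h
      · refine (continuousWithinAt_singleton (f := ψ) (x := t)).mono ?_
        intro x hx
        have : x = t := le_antisymm hx.2 (h ▸ hx.1.1)
        simp [this]
      · have halt : a < ψ t := by
          rw [← hψlo]
          exact hψmono ⟨le_rfl, hlohi.le⟩ ht h
        have h1 : ContinuousWithinAt ψ (Iic t) t := by
          apply hψmono.continuousWithinAt_left_of_image_mem_nhdsWithin
          · rw [mem_nhdsWithin]
            exact ⟨Ioi lo, isOpen_Ioi, h, fun x hx => ⟨hx.1.le, le_trans hx.2 ht.2⟩⟩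
          · refine Filter.mem_of_superset ?_ hψimage
            rw [mem_nhdsWithin]
            exact ⟨Ioi a, isOpen_Ioi, halt, fun x hx => ⟨hx.1.le, le_trans hx.2 (hψ' t ht).1.2⟩⟩
        exact h1.mono inter_subset_right
    have hright : ContinuousWithinAt ψ (Icc lo hi ∩ Ici t) t := by
      rcases eq_or_lt_of_le ht.2 with h | h
      · refine (continuousWithinAt_singleton (f := ψ) (x := t)).mono ?_
        intro x hx
        have : x = t := le_antisymm (h ▸ hx.1.2) hx.2
        simp [this]
      · have hltb : ψ t < b := by
          rw [← hψhi]
          exact hψmono ht ⟨hlohi.le, le_rfl⟩ h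
        have h1 : ContinuousWithinAt ψ (Ici t) t := by
          apply hψmono.continuousWithinAt_right_of_image_mem_nhdsWithin
          · rw [mem_nhdsWithin]
            exact ⟨Iio hi, isOpen_Iio, h, fun x hx => ⟨le_trans ht.1 hx.2, hx.1.le⟩⟩
          · refine Filter.mem_of_superset ?_ hψimage
            rw [mem_nhdsWithin]
            exact ⟨Iio b, isOpen_Iio, hltb, fun x hx => ⟨le_trans (hψ' t ht).1.1 hx.2, hx.1.le⟩⟩
        exact h1.mono inter_subset_right
    have := hleft.union hright
    refine this.mono ?_
    intro x hx
    rcases le_total x t with h | h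
    · exact Or.inl ⟨hx, h⟩
    · exact Or.inr ⟨hx, h⟩
  -- derivative of ψ
  have hψmem : ∀ t ∈ Icc lo hi, ψ t ∈ Icc 0 x₀ := fun t ht => hsubab (hψ' t ht).1
  have hψderiv : ∀ t ∈ Ioo lo hi,
      HasDerivAt ψ (z - q (ψ t) / z * Real.sin t ^ 2)⁻¹ t := by
    intro t ht
    have htIcc : t ∈ Icc lo hi := Ioo_subset_Icc_self ht
    have hnhds : Icc lo hi ∈ nhds t := Icc_mem_nhds ht.1 ht.2
    have hder := hφODE (ψ t) (hψmem t htIcc)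
    rw [(hψ' t htIcc).2] at hder
    refine HasDerivAt.of_local_left_inverse (hψcont.continuousAt hnhds) hder ?_ ?_
    · have := hφ'pos (ψ t) (hψmem t htIcc)
      rw [(hψ' t htIcc).2] at this
      exact this.ne'
    · filter_upwards [hnhds] with y hy
      exact (hψ' y hy).2
  -- basic bounds
  have hq'nonneg : ∀ x ∈ Ioo (0:ℝ) x₀, 0 ≤ q' x := by
    intro x hx
    have hd := hqdiff x ⟨hx.1.le, hx.2.le⟩
    have h1 := hasDerivAt_iff_tendsto_slope.1 hd
    have h2 : Filter.Tendsto (slope q x) (nhdsWithin x (Ioi x)) (nhds (q' x)) :=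
      h1.mono_left (nhdsWithin_mono _ (fun y hy => ne_of_gt hy))
    refine ge_of_tendsto h2 ?_
    filter_upwards [Ioo_mem_nhdsGT_of_mem ⟨le_rfl, hx.2⟩] with y hy
    have hqq : q x ≤ q y := hmono ⟨hx.1.le, hx.2.le⟩ ⟨(hx.1.trans hy.1).le, hy.2.le⟩ hy.1.le
    have hyx : 0 < y - x := sub_pos.2 hy.1
    rw [slope_def_field]
    exact div_nonneg (sub_nonneg.2 hqq) hyx.le
  have hψIoo : ∀ t ∈ Ioo lo hi, ψ t ∈ Ioo (0:ℝ) x₀ := by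
    intro t ht
    have h1 : a < ψ t := by
      rw [← hψlo]; exact hψmono ⟨le_rfl, hlohi.le⟩ (Ioo_subset_Icc_self ht) ht.1
    have h2 : ψ t < b := by
      rw [← hψhi]; exact hψmono (Ioo_subset_Icc_self ht) ⟨hlohi.le, le_rfl⟩ ht.2
    exact ⟨lt_of_lt_of_le ha.1 h1.le, lt_of_lt_of_le h2 hb.2⟩
  have hQ0 : ∀ t ∈ Icc lo hi, 0 ≤ q (ψ t) / z ^ 2 :=
    fun t ht => div_nonneg (hqnonneg _ (hψmem t ht)) hz2.le
  have hQ1 : ∀ t ∈ Icc lo hi, q (ψ t) / z ^ 2 < 1 :=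
    fun t ht => (div_lt_one hz2).2 (hqlt _ (hψmem t ht))
  have hden : ∀ t ∈ Icc lo hi, 0 < 1 - q (ψ t) / z ^ 2 * Real.sin t ^ 2 := by
    intro t ht
    have h1 := hQ0 t ht; have h2 := hQ1 t ht
    nlinarith [Real.sin_sq_le_one t, sq_nonneg (Real.sin t)]
  have hden' : ∀ t ∈ Icc lo hi, 0 < 1 - q (ψ t) / z ^ 2 := by
    intro t ht; have := hQ1 t ht; linarith
  have hφ'ψpos : ∀ t ∈ Icc lo hi, 0 < z - q (ψ t) / z * Real.sin t ^ 2 := by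
    intro t ht
    have := hφ'pos (ψ t) (hψmem t ht)
    rwa [(hψ' t ht).2] at this
  -- the functions
  set g : ℝ → ℝ := fun s => q (ψ s) / z ^ 2 * Real.sin s * Real.cos s /
      (1 - q (ψ s) / z ^ 2 * Real.sin s ^ 2) with hgdef
  set F : ℝ → ℝ := fun s => -(1/2) * Real.log (1 - q (ψ s) / z ^ 2 * Real.sin s ^ 2) with hFdef
  set G : ℝ → ℝ := fun s => -(1/2) * Real.log (1 - q (ψ s) / z ^ 2) with hGdef
  set G' : ℝ → ℝ := fun s => q' (ψ s) * (z - q (ψ s) / z * Real.sin s ^ 2)⁻¹ / z ^ 2 /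
      (2 * (1 - q (ψ s) / z ^ 2)) with hG'def
  have hqψcont : ContinuousOn (fun t => q (ψ t)) (Icc lo hi) := hqcont.comp hψcont hψmem
  have hdencont : ContinuousOn (fun t => 1 - q (ψ t) / z ^ 2 * Real.sin t ^ 2) (Icc lo hi) :=
    continuousOn_const.sub ((hqψcont.div_const _).mul ((Real.continuous_sin.continuousOn).pow 2))
  have hgcont : ContinuousOn g (Icc lo hi) := by
    apply ContinuousOn.div
    · exact ((hqψcont.div_const _).mul Real.continuous_sin.continuousOn).mul
        Real.continuous_cos.continuousOn
    · exact hdencont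
    · exact fun t ht => (hden t ht).ne'
  have hgint : IntervalIntegrable g MeasureTheory.volume lo hi := by
    apply ContinuousOn.intervalIntegrable
    rwa [uIcc_of_le hlohi.le]
  -- derivatives
  have hQd : ∀ t ∈ Ioo lo hi, HasDerivAt (fun s => q (ψ s) / z ^ 2)
      (q' (ψ t) * (z - q (ψ t) / z * Real.sin t ^ 2)⁻¹ / z ^ 2) t := by
    intro t ht
    have h1 : HasDerivAt (fun s => q (ψ s))
        (q' (ψ t) * (z - q (ψ t) / z * Real.sin t ^ 2)⁻¹) t := by
      have := (hqdiff (ψ t) (hψmem t (Ioo_subset_Icc_self ht))).comp t (hψderiv t ht)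
      simpa [Function.comp_def] using this
    exact h1.div_const _
  have hGd : ∀ t ∈ Ioo lo hi, HasDerivAt G (G' t) t := by
    intro t ht
    have hne := (hden' t (Ioo_subset_Icc_self ht)).ne'
    have h2 := (((hQd t ht).const_sub 1).log hne).const_mul (-(1/2 : ℝ))
    have heq : G' t = -(1/2 : ℝ) * (-(q' (ψ t) * (z - q (ψ t) / z * Real.sin t ^ 2)⁻¹ / z ^ 2) /
        (1 - q (ψ t) / z ^ 2)) := by
      simp only [hG'def]
      field_simp
    rw [hGdef, heq]
    exact h2
  have hsin2d : ∀ t : ℝ, HasDerivAt (fun s => Real.sin s ^ 2) (2 * Real.sin t * Real.cos t) t := by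
    intro t
    have := (Real.hasDerivAt_sin t).fun_pow 2
    simpa using this
  have hFd : ∀ t ∈ Ioo lo hi, HasDerivAt F
      (-(1/2 : ℝ) * (-(q' (ψ t) * (z - q (ψ t) / z * Real.sin t ^ 2)⁻¹ / z ^ 2 * Real.sin t ^ 2 +
          q (ψ t) / z ^ 2 * (2 * Real.sin t * Real.cos t)) /
        (1 - q (ψ t) / z ^ 2 * Real.sin t ^ 2))) t := by
    intro t ht
    have hne := (hden t (Ioo_subset_Icc_self ht)).ne'
    have hu := ((hQd t ht).mul (hsin2d t)).const_sub 1
    exact (hu.log hne).const_mul (-(1/2 : ℝ))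
  -- FTC for the primitive of g
  have hprim : ∀ t ∈ Ioo lo hi, HasDerivAt (fun s => ∫ u in lo..s, g u) (g t) t := by
    intro t ht
    apply intervalIntegral.integral_hasDerivAt_right
    · apply hgint.mono_set
      rw [uIcc_of_le hlohi.le, uIcc_of_le ht.1.le]
      exact Icc_subset_Icc_right ht.2.le
    · exact ContinuousOn.stronglyMeasurableAtFilter isOpen_Ioo
        (hgcont.mono Ioo_subset_Icc_self) t ht
    · exact hgcont.continuousAt (Icc_mem_nhds ht.1 ht.2)
  have hprimcont : ContinuousOn (fun s => ∫ u in lo..s, g u) (Icc lo hi) := by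
    have := intervalIntegral.continuousOn_primitive_interval' hgint left_mem_uIcc
    rwa [uIcc_of_le hlohi.le] at this
  have hFcont : ContinuousOn F (Icc lo hi) :=
    continuousOn_const.mul (hdencont.log (fun t ht => (hden t ht).ne'))
  have hGcont : ContinuousOn G (Icc lo hi) :=
    continuousOn_const.mul ((continuousOn_const.sub (hqψcont.div_const _)).log
      (fun t ht => (hden' t ht).ne'))
  -- monotonicity of K = F - primitive
  have hQ'nonneg : ∀ t ∈ Ioo lo hi,
      0 ≤ q' (ψ t) * (z - q (ψ t) / z * Real.sin t ^ 2)⁻¹ / z ^ 2 := by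
    intro t ht
    have h1 := hq'nonneg (ψ t) (hψIoo t ht)
    have h2 := hφ'ψpos t (Ioo_subset_Icc_self ht)
    positivity
  have hKmono : MonotoneOn (fun s => F s - ∫ u in lo..s, g u) (Icc lo hi) := by
    apply monotoneOn_of_hasDerivWithinAt_nonneg (f' := fun t =>
        -(1/2 : ℝ) * (-(q' (ψ t) * (z - q (ψ t) / z * Real.sin t ^ 2)⁻¹ / z ^ 2 * Real.sin t ^ 2 +
            q (ψ t) / z ^ 2 * (2 * Real.sin t * Real.cos t)) /
          (1 - q (ψ t) / z ^ 2 * Real.sin t ^ 2)) - g t)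
      (convex_Icc lo hi) (hFcont.sub hprimcont)
    · intro t ht
      rw [interior_Icc] at ht
      exact ((hFd t ht).sub (hprim t ht)).hasDerivWithinAt
    · intro t ht
      rw [interior_Icc] at ht
      have hA := hQ'nonneg t ht
      have hd := hden t (Ioo_subset_Icc_self ht)
      have hdne : 1 - q (ψ t) / z ^ 2 * Real.sin t ^ 2 ≠ 0 := hd.ne'
      have hpne : z - q (ψ t) / z * Real.sin t ^ 2 ≠ 0 := (hφ'ψpos t (Ioo_subset_Icc_self ht)).ne'
      have hzne : z ≠ 0 := hz.ne'
      have heq := aux_cross (q' (ψ t) * (z - q (ψ t) / z * Real.sin t ^ 2)⁻¹ / z ^ 2)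
        (q (ψ t) / z ^ 2) (Real.sin t) (Real.cos t)
        (1 - q (ψ t) / z ^ 2 * Real.sin t ^ 2) hdne
      simp only [hgdef]
      rw [heq]
      positivity
  -- I ≤ F hi - F lo
  have hIle : (∫ u in lo..hi, g u) ≤ F hi - F lo := by
    have h1 := hKmono ⟨le_rfl, hlohi.le⟩ ⟨hlohi.le, le_rfl⟩ hlohi.le
    simp only [intervalIntegral.integral_same] at h1
    linarith
  -- F lo = G lo, F hi ≤ G hi
  have hsinlo : Real.sin lo ^ 2 = 1 := by
    have h0 : Real.sin ((i:ℝ) * π) = 0 := Real.sin_nat_mul_pi i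
    have h2 := Real.sin_sq_add_cos_sq ((i:ℝ) * π)
    rw [hlodef, Real.sin_add, h0, Real.cos_pi_div_two, Real.sin_pi_div_two]
    nlinarith
  have hFlo : F lo = G lo := by
    simp only [hFdef, hGdef, hsinlo, mul_one]
  have hFhi : F hi ≤ G hi := by
    have hhiIcc : hi ∈ Icc lo hi := ⟨hlohi.le, le_rfl⟩
    have h1 : 1 - q (ψ hi) / z ^ 2 ≤ 1 - q (ψ hi) / z ^ 2 * Real.sin hi ^ 2 := by
      have := hQ0 hi hhiIcc
      nlinarith [Real.sin_sq_le_one hi]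
    have h2 := Real.log_le_log (hden' hi hhiIcc) h1
    simp only [hFdef, hGdef]
    linarith
  -- mean value theorem for G
  obtain ⟨c₁, hc₁, hslope⟩ := exists_hasDerivAt_eq_slope G G' hlohi hGcont hGd
  have hc₁Icc : c₁ ∈ Icc lo hi := Ioo_subset_Icc_self hc₁
  have hGG : G hi - G lo = D * G' c₁ := by
    have hD' : hi - lo = D := by rw [hhidef]; ring
    rw [hslope, hD']
    field_simp
  have hG'nonneg : 0 ≤ G' c₁ := by
    simp only [hG'def]
    have h1 := hq'nonneg (ψ c₁) (hψIoo c₁ hc₁)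
    have h2 := hφ'ψpos c₁ hc₁Icc
    have h3 := hden' c₁ hc₁Icc
    positivity
  have key : (∫ u in lo..hi, g u) ≤ π * G' c₁ := by
    have h1 : D * G' c₁ ≤ π * G' c₁ := mul_le_mul_of_nonneg_right hD2 hG'nonneg
    linarith
  -- rewrite the goal integral
  have hsin0 : Real.sin (((i:ℝ) + 1) * π) = 0 := by
    have h1 : ((i:ℝ) + 1) * π = ((i + 1 : ℕ) : ℝ) * π := by push_cast; ring
    rw [h1, Real.sin_nat_mul_pi]
  have hcos2 : Real.cos (((i:ℝ) + 1) * π) ^ 2 = 1 := by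
    have h2 := Real.sin_sq_add_cos_sq (((i:ℝ) + 1) * π)
    rw [hsin0] at h2
    nlinarith
  have hshift : ∀ t : ℝ, q (ψ (t + ((i:ℝ) + 1) * π)) / z ^ 2 * Real.sin t * Real.cos t /
      (1 - q (ψ (t + ((i:ℝ) + 1) * π)) / z ^ 2 * Real.sin t ^ 2) = g (t + ((i:ℝ) + 1) * π) := by
    intro t
    simp only [hgdef, Real.sin_add, Real.cos_add, hsin0, mul_zero, add_zero, sub_zero]
    rw [mul_pow, hcos2, mul_one]
    congr 1
    linear_combination -(q (ψ (t + ((i:ℝ) + 1) * π)) / z ^ 2 * Real.sin t * Real.cos t) * hcos2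
  have hIeq : (∫ t in (-(π/2))..(-(π/2) + D),
      q (ψ (t + ((i:ℝ) + 1) * π)) / z ^ 2 * Real.sin t * Real.cos t /
        (1 - q (ψ (t + ((i:ℝ) + 1) * π)) / z ^ 2 * Real.sin t ^ 2)) = ∫ s in lo..hi, g s := by
    rw [intervalIntegral.integral_congr (g := fun t => g (t + ((i:ℝ) + 1) * π))
      (fun t _ => hshift t)]
    rw [intervalIntegral.integral_comp_add_right g (((i:ℝ) + 1) * π)]
    congr 1
    · rw [hlodef]; ring
    · rw [hhidef]; ring
  -- conclude
  have hφψc : φ (ψ c₁) = c₁ := (hψ' c₁ hc₁Icc).2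
  refine ⟨c₁, hc₁, ?_⟩
  rw [hIeq, hφψc]
  have hfacneg : -(((i:ℝ) + 1) * π) ≤ 0 := by
    have : (0:ℝ) ≤ ((i:ℝ) + 1) * π := by positivity
    linarith
  have hmul := mul_le_mul_of_nonpos_left key hfacneg
  refine le_trans (le_of_eq ?_) hmul
  simp only [hG'def]
  have hne1 : (1 : ℝ) - q (ψ c₁) / z ^ 2 ≠ 0 := (hden' c₁ hc₁Icc).ne'
  have hne2 : z - q (ψ c₁) / z * Real.sin c₁ ^ 2 ≠ 0 := (hφ'ψpos c₁ hc₁Icc).ne'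
  field_simp
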